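/- For α, γ > −1 and m > n ≥ 0, with c_{α,γ} = Γ(γ+α+2)/(Γ(γ+1)Γ(α+1)): c_{α,γ} ∫₀¹ P_n^{(γ,α)}(2x−1) P_{m-1}^{(γ+2,α)}(2x−1) (1−x)^{γ+1} x^α dx = (γ+1)(α+1)_{m-1}(γ+1)_n / ((γ+α+2)_m · n!), where P_k^{(a,b)} is the Jacobi polynomial and (a)_k the Pochhammer symbol. -/

import Mathlib

open MeasureTheory Finset

noncomputable section

/-- Pochhammer symbol `(a)ₖ = a(a+1)⋯(a+k-1)` for real `a`. -/
def poch (a : ℝ) (k : ℕ) : ℝ := (ascPochhammer ℝ k).eval a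

/-- The Jacobi polynomial `P_n^{(a,b)}(x)` via the hypergeometric sum
`P_n^{(a,b)}(x) = ((a+1)ₙ/n!) Σ_{k=0}^n ((-n)ₖ(n+a+b+1)ₖ)/((a+1)ₖ k!) ((1-x)/2)^k`. -/
def jacobiP (n : ℕ) (a b : ℝ) (x : ℝ) : ℝ :=
  poch (a + 1) n / (Nat.factorial n : ℝ) *
    ∑ k ∈ range (n + 1),
      poch (-(n : ℝ)) k * poch ((n : ℝ) + a + b + 1) k /
        (poch (a + 1) k * (Nat.factorial k : ℝ)) * ((1 - x) / 2) ^ k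

/-- The normalizing constant `c_{α,γ} = Γ(γ+α+2)/(Γ(γ+1)Γ(α+1))`. -/
def cJ (α γ : ℝ) : ℝ := Real.Gamma (γ + α + 2) / (Real.Gamma (γ + 1) * Real.Gamma (α + 1))

lemma poch_zero (a : ℝ) : poch a 0 = 1 := by simp [poch]

lemma poch_one (a : ℝ) : poch a 1 = a := by simp [poch]

lemma poch_succ (a : ℝ) (k : ℕ) : poch a (k + 1) = poch a k * (a + k) :=
  ascPochhammer_succ_eval k a

lemma poch_succ_left (a : ℝ) (k : ℕ) : poch a (k + 1) = a * poch (a + 1) k := by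
  unfold poch
  rw [ascPochhammer_succ_left, Polynomial.eval_mul, Polynomial.eval_X, Polynomial.eval_comp,
    Polynomial.eval_add, Polynomial.eval_X, Polynomial.eval_one]

lemma poch_add (a : ℝ) (j i : ℕ) : poch a (j + i) = poch a j * poch (a + j) i := by
  unfold poch
  rw [← ascPochhammer_mul, Polynomial.eval_mul, Polynomial.eval_comp, Polynomial.eval_add,
    Polynomial.eval_X, Polynomial.eval_natCast]

lemma poch_pos {a : ℝ} (ha : 0 < a) (k : ℕ) : 0 < poch a k := by
  induction k with
  | zero => simp [poch_zero]
  | succ k ih => rw [poch_succ]; positivity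

lemma poch_ne_zero {a : ℝ} (ha : 0 < a) (k : ℕ) : poch a k ≠ 0 := (poch_pos ha k).ne'

/-- `(-x)_s = (-1)^s (x-s+1)_s`. -/
lemma poch_neg (x : ℝ) (s : ℕ) : poch (-x) s = (-1) ^ s * poch (x - s + 1) s := by
  induction s generalizing x with
  | zero => simp [poch_zero]
  | succ s ih =>
      rw [poch_succ, ih, poch_succ_left]
      push_cast
      have : x - (s + 1) + 1 + 1 = x - s + 1 := by ring
      rw [this]
      ring

lemma poch_eq_zero_of_neg_nat {a : ℝ} {M i : ℕ} (hi : i < M) (h : a + i = 0) :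
    poch a M = 0 := by
  have : M = (i + 1) + (M - i - 1) := by omega
  rw [this, poch_add, poch_succ, h]
  ring

/-- `(-N)_j = (-1)^j * j! * (N choose j)` for `j ≤ N`. -/
lemma poch_neg_nat (N j : ℕ) (h : j ≤ N) :
    poch (-(N : ℝ)) j = (-1) ^ j * (Nat.factorial j) * (N.choose j) := by
  induction j with
  | zero => simp [poch_zero]
  | succ j ih =>
      have hj : j ≤ N := le_of_lt h
      rw [poch_succ, ih hj]
      have h2 := congrArg (Nat.cast (R := ℝ)) (Nat.choose_succ_right_eq N j)
      push_cast [Nat.cast_sub hj] at h2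
      rw [pow_succ, Nat.factorial_succ]
      push_cast
      linear_combination ((-1 : ℝ)) ^ j * (Nat.factorial j : ℝ) * h2

/-- Division-free Chu–Vandermonde. -/
lemma vand (N : ℕ) (b c : ℝ) :
    ∑ j ∈ range (N + 1), (-1) ^ j * (N.choose j : ℝ) * poch b j * poch (c + j) (N - j)
      = poch (c - b) N := by
  induction N generalizing b c with
  | zero => simp [poch_zero]
  | succ N ih =>
      rw [Finset.sum_range_succ'
        (fun j => (-1 : ℝ) ^ j * ((N+1).choose j : ℝ) * poch b j * poch (c + (j : ℝ)) (N + 1 - j)) (N+1)]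
      have key : ∀ j ∈ range (N + 1),
          (-1 : ℝ) ^ (j+1) * ((N+1).choose (j+1) : ℝ) * poch b (j+1) * poch (c + ((j+1 : ℕ) : ℝ)) (N + 1 - (j+1))
          = -b * ((-1) ^ j * (N.choose j : ℝ) * poch (b+1) j * poch ((c+1) + (j : ℝ)) (N - j))
            + (-1) ^ (j+1) * (N.choose (j+1) : ℝ) * poch b (j+1) * poch (c + ((j+1 : ℕ) : ℝ)) (N + 1 - (j+1)) := by
        intro j hj
        have hch : ((N + 1).choose (j+1) : ℝ) = N.choose j + N.choose (j+1) := by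
          exact_mod_cast congrArg (Nat.cast (R := ℝ)) (Nat.choose_succ_succ N j)
        rw [hch, poch_succ_left b j]
        have h1 : (N + 1) - (j + 1) = N - j := by omega
        have h2 : c + ((j + 1 : ℕ) : ℝ) = (c + 1) + (j : ℝ) := by push_cast; ring
        rw [h1, h2]
        ring
      rw [Finset.sum_congr rfl key, Finset.sum_add_distrib]
      have hA : ∑ j ∈ range (N + 1),
          -b * ((-1 : ℝ) ^ j * (N.choose j : ℝ) * poch (b+1) j * poch ((c+1) + (j : ℝ)) (N - j))
          = -b * poch (c - b) N := by
        rw [← Finset.mul_sum, ih (b+1) (c+1)]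
        norm_num
      rw [hA]
      have hB : (∑ j ∈ range (N + 1),
            (-1 : ℝ) ^ (j+1) * (N.choose (j+1) : ℝ) * poch b (j+1) * poch (c + ((j+1 : ℕ) : ℝ)) (N + 1 - (j+1)))
          + (-1 : ℝ) ^ 0 * ((N+1).choose 0 : ℝ) * poch b 0 * poch (c + ((0 : ℕ) : ℝ)) (N + 1 - 0)
          = (c + N) * poch (c - b) N := by
        have h0 : (-1 : ℝ) ^ 0 * ((N+1).choose 0 : ℝ) * poch b 0 * poch (c + ((0 : ℕ) : ℝ)) (N + 1 - 0)
            = (-1 : ℝ) ^ 0 * (N.choose 0 : ℝ) * poch b 0 * poch (c + ((0 : ℕ) : ℝ)) (N + 1 - 0) := by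
          simp
        rw [h0, ← Finset.sum_range_succ'
          (fun j => (-1 : ℝ) ^ j * (N.choose j : ℝ) * poch b j * poch (c + (j : ℝ)) (N + 1 - j)) (N+1)]
        rw [Finset.sum_range_succ]
        simp only [Nat.choose_succ_self, Nat.cast_zero]
        rw [← ih b c, Finset.mul_sum]
        have : ∀ j ∈ range (N + 1),
            (-1 : ℝ) ^ j * (N.choose j : ℝ) * poch b j * poch (c + (j : ℝ)) (N + 1 - j)
            = (c + N) * ((-1) ^ j * (N.choose j : ℝ) * poch b j * poch (c + (j : ℝ)) (N - j)) := by
          intro j hj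
          simp only [Finset.mem_range] at hj
          have hj' : j ≤ N := Nat.lt_succ_iff.mp hj
          have hNj : N + 1 - j = (N - j) + 1 := by omega
          rw [hNj, poch_succ]
          have : c + (j : ℝ) + ((N - j : ℕ) : ℝ) = c + N := by
            push_cast [Nat.cast_sub hj']; ring
          rw [this]
          ring
        rw [Finset.sum_congr rfl this]
        ring
      rw [add_assoc, hB, poch_succ]
      push_cast
      ring

/-- Chu–Vandermonde, divided form. -/
lemma chu (N : ℕ) (b : ℝ) {c : ℝ} (hc : 0 < c) :
    ∑ j ∈ range (N + 1),
        poch (-(N : ℝ)) j * poch b j / (poch c j * (Nat.factorial j : ℝ))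
      = poch (c - b) N / poch c N := by
  rw [eq_div_iff (poch_ne_zero hc N), Finset.sum_mul, ← vand N b c]
  refine Finset.sum_congr rfl fun j hj => ?_
  simp only [Finset.mem_range] at hj
  have hj' : j ≤ N := Nat.lt_succ_iff.mp hj
  have hsplit : poch c N = poch c j * poch (c + j) (N - j) := by
    have : N = j + (N - j) := by omega
    rw [this, poch_add]
    congr 2
    omega
  rw [poch_neg_nat N j hj', hsplit]
  have h1 : poch c j ≠ 0 := poch_ne_zero hc j
  have h2 : (Nat.factorial j : ℝ) ≠ 0 := Nat.cast_ne_zero.mpr (Nat.factorial_ne_zero j)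
  field_simp

lemma coeff_eq (N i : ℕ) (hi : i ≤ N) (a b : ℝ) (ha : -1 < a) (hb : -1 < b) (t : ℝ) :
    (-1 : ℝ) ^ N * (poch (b + 1) N / (Nat.factorial N : ℝ)) *
      ∑ l ∈ range (N + 1 - i),
        poch (-(N : ℝ)) (i + l) * poch ((N : ℝ) + b + a + 1) (i + l) /
            (poch (b + 1) (i + l) * (Nat.factorial (i + l) : ℝ)) *
          ((-t) ^ i * ((i + l).choose i : ℝ))
    = poch (a + 1) N / (Nat.factorial N : ℝ) *
        (poch (-(N : ℝ)) i * poch ((N : ℝ) + a + b + 1) i /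
            (poch (a + 1) i * (Nat.factorial i : ℝ)) * t ^ i) := by
  obtain ⟨s, rfl⟩ : ∃ s, N = i + s := ⟨N - i, by omega⟩
  have hia : (0 : ℝ) < a + 1 := by linarith
  have hib : (0 : ℝ) < b + 1 := by linarith
  have hci : (0 : ℝ) < b + 1 + (i : ℝ) := by
    have := Nat.cast_nonneg (α := ℝ) i; linarith
  have hbi : poch (b + 1) i ≠ 0 := poch_ne_zero hib i
  have hai : poch (a + 1) i ≠ 0 := poch_ne_zero hia i
  have hbis : poch (b + 1 + (i : ℝ)) s ≠ 0 := poch_ne_zero hci s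
  have hfi : (Nat.factorial i : ℝ) ≠ 0 := Nat.cast_ne_zero.mpr (Nat.factorial_ne_zero i)
  -- rewrite range bound
  have hrange : i + s + 1 - i = s + 1 := by omega
  rw [hrange]
  -- termwise rewrite
  have hterm : ∀ l ∈ range (s + 1),
      poch (-((i + s : ℕ) : ℝ)) (i + l) * poch (((i + s : ℕ) : ℝ) + b + a + 1) (i + l) /
          (poch (b + 1) (i + l) * (Nat.factorial (i + l) : ℝ)) *
        ((-t) ^ i * ((i + l).choose i : ℝ))
      = (poch (-((i + s : ℕ) : ℝ)) i * poch (((i + s : ℕ) : ℝ) + b + a + 1) i * (-t) ^ i /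
          (poch (b + 1) i * (Nat.factorial i : ℝ))) *
        (poch (-((s : ℕ) : ℝ)) l * poch ((((i + s : ℕ) : ℝ) + b + a + 1) + (i : ℝ)) l /
          (poch (b + 1 + (i : ℝ)) l * (Nat.factorial l : ℝ))) := by
    intro l hl
    rw [poch_add (-((i + s : ℕ) : ℝ)) i l, poch_add (((i + s : ℕ) : ℝ) + b + a + 1) i l,
      poch_add (b + 1) i l]
    have hneg : -((i + s : ℕ) : ℝ) + (i : ℝ) = -((s : ℕ) : ℝ) := by push_cast; ring
    rw [hneg]
    have hfac : ((Nat.factorial (i + l) : ℕ) : ℝ)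
        = ((i + l).choose i : ℝ) * (Nat.factorial l : ℝ) * (Nat.factorial i : ℝ) := by
      have h := Nat.add_choose_mul_factorial_mul_factorial l i
      rw [Nat.add_comm l i] at h
      exact_mod_cast h.symm
    rw [hfac]
    have hfl : (Nat.factorial l : ℝ) ≠ 0 := Nat.cast_ne_zero.mpr (Nat.factorial_ne_zero l)
    have hch : ((i + l).choose i : ℝ) ≠ 0 := by
      exact_mod_cast Nat.cast_ne_zero.mpr (Nat.choose_pos (Nat.le_add_right i l)).ne'
    have hbl : poch (b + 1 + (i : ℝ)) l ≠ 0 := poch_ne_zero hci l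
    field_simp
  rw [Finset.sum_congr rfl hterm, ← Finset.mul_sum, chu s (((i + s : ℕ) : ℝ) + b + a + 1 + (i : ℝ)) hci]
  have hcb : b + 1 + (i : ℝ) - (((i + s : ℕ) : ℝ) + b + a + 1 + (i : ℝ)) = -(a + ((i + s : ℕ) : ℝ)) := by
    push_cast; ring
  rw [hcb, poch_neg (a + ((i + s : ℕ) : ℝ)) s]
  have hred : a + ((i + s : ℕ) : ℝ) - (s : ℝ) + 1 = a + 1 + (i : ℝ) := by push_cast; ring
  rw [hred]
  have hsplitb : poch (b + 1) (i + s) = poch (b + 1) i * poch (b + 1 + (i : ℝ)) s := poch_add _ i s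
  have hsplita : poch (a + 1) (i + s) = poch (a + 1) i * poch (a + 1 + (i : ℝ)) s := poch_add _ i s
  rw [hsplitb, hsplita, neg_pow t i]
  have hfN : (Nat.factorial (i + s) : ℝ) ≠ 0 := Nat.cast_ne_zero.mpr (Nat.factorial_ne_zero _)
  rcases Nat.even_or_odd i with hi2 | hi2 <;> rcases Nat.even_or_odd s with hs2 | hs2 <;>
    simp only [pow_add, hi2.neg_one_pow, hs2.neg_one_pow] <;>
    field_simp <;> ring_nf

lemma jacobiP_reflect (N : ℕ) (a b : ℝ) (ha : -1 < a) (hb : -1 < b) (y : ℝ) :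
    jacobiP N a b y = (-1 : ℝ) ^ N * jacobiP N b a (-y) := by
  unfold jacobiP
  have h1t : (1 - -y) / 2 = 1 - (1 - y) / 2 := by ring
  simp only [h1t]
  set t := (1 - y) / 2 with ht
  rw [Finset.mul_sum, Finset.mul_sum, Finset.mul_sum]
  have step1 : ∀ j ∈ range (N + 1),
      (-1 : ℝ) ^ N * (poch (b + 1) N / (Nat.factorial N : ℝ) *
        (poch (-(N : ℝ)) j * poch ((N : ℝ) + b + a + 1) j /
          (poch (b + 1) j * (Nat.factorial j : ℝ)) * (1 - t) ^ j))
      = ∑ i ∈ range (N + 1),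
          (-1 : ℝ) ^ N * (poch (b + 1) N / (Nat.factorial N : ℝ)) *
            (poch (-(N : ℝ)) j * poch ((N : ℝ) + b + a + 1) j /
              (poch (b + 1) j * (Nat.factorial j : ℝ)) * ((-t) ^ i * (j.choose i : ℝ))) := by
    intro j hj
    simp only [Finset.mem_range] at hj
    have hexp : (1 - t) ^ j = ∑ i ∈ range (j + 1), (-t) ^ i * (j.choose i : ℝ) := by
      have h2 : (1 : ℝ) - t = -t + 1 := by ring
      rw [h2, add_pow]
      exact Finset.sum_congr rfl fun i _ => by rw [one_pow, mul_one]
    have e1 : (-1 : ℝ) ^ N * (poch (b + 1) N / (Nat.factorial N : ℝ) *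
        (poch (-(N : ℝ)) j * poch ((N : ℝ) + b + a + 1) j /
          (poch (b + 1) j * (Nat.factorial j : ℝ)) * (1 - t) ^ j))
        = ∑ i ∈ range (j + 1),
          (-1 : ℝ) ^ N * (poch (b + 1) N / (Nat.factorial N : ℝ)) *
            (poch (-(N : ℝ)) j * poch ((N : ℝ) + b + a + 1) j /
              (poch (b + 1) j * (Nat.factorial j : ℝ)) * ((-t) ^ i * (j.choose i : ℝ))) := by
      rw [hexp, Finset.mul_sum, Finset.mul_sum, Finset.mul_sum]
      exact Finset.sum_congr rfl fun i _ => by ring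
    rw [e1]
    refine Finset.sum_subset (Finset.range_subset_range.mpr (by omega : j + 1 ≤ N + 1))
      fun i _ hik => ?_
    simp only [Finset.mem_range, not_lt] at hik
    rw [Nat.choose_eq_zero_of_lt hik]
    simp
  rw [Finset.sum_congr rfl step1, Finset.sum_comm]
  refine Finset.sum_congr rfl fun i hi => ?_
  simp only [Finset.mem_range] at hi
  have hi' : i ≤ N := Nat.lt_succ_iff.mp hi
  have step2 : ∑ j ∈ range (N + 1),
      (-1 : ℝ) ^ N * (poch (b + 1) N / (Nat.factorial N : ℝ)) *
        (poch (-(N : ℝ)) j * poch ((N : ℝ) + b + a + 1) j /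
          (poch (b + 1) j * (Nat.factorial j : ℝ)) * ((-t) ^ i * (j.choose i : ℝ)))
      = ∑ j ∈ Finset.Ico i (N + 1),
          (-1 : ℝ) ^ N * (poch (b + 1) N / (Nat.factorial N : ℝ)) *
            (poch (-(N : ℝ)) j * poch ((N : ℝ) + b + a + 1) j /
              (poch (b + 1) j * (Nat.factorial j : ℝ)) * ((-t) ^ i * (j.choose i : ℝ))) := by
    refine (Finset.sum_subset (fun j hj => ?_) (fun j hj hji => ?_)).symm
    · simp only [Finset.mem_Ico] at hj
      exact Finset.mem_range.mpr hj.2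
    · simp only [Finset.mem_range] at hj
      simp only [Finset.mem_Ico, not_and, not_le] at hji
      have hjlt : j < i := by
        by_contra hc
        exact hji (by omega) hj
      rw [Nat.choose_eq_zero_of_lt hjlt]
      simp
  rw [step2, Finset.sum_Ico_eq_sum_range]
  have hr : N + 1 - i = N + 1 - i := rfl
  rw [← Finset.mul_sum]
  exact (coeff_eq N i hi' a b ha hb t).symm

/-- real Beta integral, interval form. -/
lemma rbeta_eq {p q : ℝ} (hp : -1 < p) (hq : -1 < q) :
    ∫ x in (0:ℝ)..1, x ^ p * (1 - x) ^ q
      = Real.Gamma (p+1) * Real.Gamma (q+1) / Real.Gamma (p+q+2) := by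
  have hu : (0:ℝ) < ((p+1:ℂ)).re := by simp; linarith
  have hv : (0:ℝ) < ((q+1:ℂ)).re := by simp; linarith
  have hB := Complex.Gamma_mul_Gamma_eq_betaIntegral (s := (p+1:ℝ)) (t := (q+1:ℝ))
    (by simp [Complex.ofReal_re]; linarith) (by simp [Complex.ofReal_re]; linarith)
  have hcongr : ∀ x ∈ Set.uIcc (0:ℝ) 1,
      (x:ℂ) ^ (((p+1:ℝ):ℂ) - 1) * (1 - (x:ℂ)) ^ (((q+1:ℝ):ℂ) - 1)
        = ((x ^ p * (1 - x) ^ q : ℝ) : ℂ) := by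
    intro x hx
    rw [Set.uIcc_of_le (by norm_num : (0:ℝ) ≤ 1)] at hx
    obtain ⟨hx0, hx1⟩ := hx
    have h1 : (((p+1:ℝ):ℂ) - 1) = ((p:ℝ):ℂ) := by push_cast; ring
    have h2 : (((q+1:ℝ):ℂ) - 1) = ((q:ℝ):ℂ) := by push_cast; ring
    have h3 : (1 - (x:ℂ)) = (((1 - x : ℝ)):ℂ) := by push_cast; ring
    rw [h1, h2, h3, ← Complex.ofReal_cpow hx0, ← Complex.ofReal_cpow (by linarith)]
    push_cast
    ring
  have hbeta : Complex.betaIntegral ((p+1:ℝ):ℂ) ((q+1:ℝ):ℂ)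
      = ((∫ x in (0:ℝ)..1, x ^ p * (1 - x) ^ q : ℝ) : ℂ) := by
    rw [Complex.betaIntegral, intervalIntegral.integral_congr hcongr,
      intervalIntegral.integral_ofReal]
  rw [hbeta] at hB
  have hG : Complex.Gamma (((p+1:ℝ)):ℂ) * Complex.Gamma (((q+1:ℝ)):ℂ)
      = Complex.Gamma ((((p+1:ℝ)):ℂ) + (((q+1:ℝ)):ℂ)) *
        ((∫ x in (0:ℝ)..1, x ^ p * (1 - x) ^ q : ℝ) : ℂ) := hB
  have hsum : ((((p+1:ℝ)):ℂ) + (((q+1:ℝ)):ℂ)) = (((p+q+2:ℝ)):ℂ) := by push_cast; ring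
  rw [hsum, Complex.Gamma_ofReal, Complex.Gamma_ofReal, Complex.Gamma_ofReal] at hG
  have hGne : Real.Gamma (p+q+2) ≠ 0 := (Real.Gamma_pos_of_pos (by linarith)).ne'
  have := hG
  rw [← Complex.ofReal_mul, ← Complex.ofReal_mul] at this
  have hr : Real.Gamma (p+1) * Real.Gamma (q+1)
      = Real.Gamma (p+q+2) * ∫ x in (0:ℝ)..1, x ^ p * (1 - x) ^ q := by
    exact_mod_cast this
  field_simp
  linarith [hr]

lemma rbeta_integrableOn {p q : ℝ} (hp : -1 < p) (hq : -1 < q) :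
    IntegrableOn (fun x : ℝ => x ^ p * (1 - x) ^ q) (Set.Ioo 0 1) volume := by
  have h := Complex.betaIntegral_convergent (u := ((p+1:ℝ):ℂ)) (v := ((q+1:ℝ):ℂ))
    (by simp [Complex.ofReal_re]; linarith) (by simp [Complex.ofReal_re]; linarith)
  have h1 : IntegrableOn (fun x : ℝ => (x:ℂ) ^ (((p+1:ℝ):ℂ) - 1) * (1 - (x:ℂ)) ^ (((q+1:ℝ):ℂ) - 1))
      (Set.Ioc 0 1) volume := (intervalIntegrable_iff_integrableOn_Ioc_of_le (by norm_num)).mp h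
  have h2 : IntegrableOn
      (fun x : ℝ => RCLike.re ((x:ℂ) ^ (((p+1:ℝ):ℂ) - 1) * (1 - (x:ℂ)) ^ (((q+1:ℝ):ℂ) - 1)))
      (Set.Ioo 0 1) volume := (h1.mono_set Set.Ioo_subset_Ioc_self).re
  refine h2.congr_fun (fun x hx => ?_) measurableSet_Ioo
  obtain ⟨hx0, hx1⟩ := hx
  have h1' : (((p+1:ℝ):ℂ) - 1) = ((p:ℝ):ℂ) := by push_cast; ring
  have h2' : (((q+1:ℝ):ℂ) - 1) = ((q:ℝ):ℂ) := by push_cast; ring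
  have h3 : (1 - (x:ℂ)) = (((1 - x : ℝ)):ℂ) := by push_cast; ring
  simp only [h1', h2', h3, ← Complex.ofReal_cpow hx0.le, ← Complex.ofReal_cpow (by linarith : (0:ℝ) ≤ 1 - x),
    ← Complex.ofReal_mul]
  simp [RCLike.ofReal_re]

lemma poch_one_fact (M : ℕ) : poch 1 M = (Nat.factorial M : ℝ) := by
  induction M with
  | zero => simp [poch_zero]
  | succ M ih => rw [poch_succ, ih, Nat.factorial_succ]; push_cast; ring

lemma Gamma_shift (x : ℝ) (hx : 0 < x) (j : ℕ) :
    Real.Gamma (x + j) = poch x j * Real.Gamma x := by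
  induction j with
  | zero => simp [poch_zero]
  | succ j ih =>
      have h1 : x + ((j + 1 : ℕ) : ℝ) = (x + j) + 1 := by push_cast; ring
      have h2 : x + (j : ℝ) ≠ 0 := by positivity
      rw [h1, Real.Gamma_add_one h2, ih, poch_succ]
      ring

lemma rbeta_Ioo {p q : ℝ} (hp : -1 < p) (hq : -1 < q) :
    ∫ x in Set.Ioo (0:ℝ) 1, x ^ p * (1 - x) ^ q
      = Real.Gamma (p+1) * Real.Gamma (q+1) / Real.Gamma (p+q+2) := by
  rw [← MeasureTheory.integral_Ioc_eq_integral_Ioo,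
    ← intervalIntegral.integral_of_le (by norm_num : (0:ℝ) ≤ 1)]
  exact rbeta_eq hp hq

set_option maxHeartbeats 2000000 in
/-- For `m > n ≥ 0`,
`c_{α,γ} ∫₀¹ P_n^{(γ,α)}(2x−1)P_{m-1}^{(γ+2,α)}(2x−1)(1−x)^{γ+1}x^α dx
 = (γ+1)(α+1)_{m-1}(γ+1)ₙ/((γ+α+2)_m n!)`. -/
theorem jacobi_cross_integral (α γ : ℝ) (hα : -1 < α) (hγ : -1 < γ)
    (m n : ℕ) (hmn : n < m) :
    cJ α γ * ∫ x in (0:ℝ)..1,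
        jacobiP n γ α (2 * x - 1) * jacobiP (m - 1) (γ + 2) α (2 * x - 1) *
          ((1 - x) ^ (γ + 1) * x ^ α) =
      (γ + 1) * poch (α + 1) (m - 1) * poch (γ + 1) n /
        (poch (γ + α + 2) m * (Nat.factorial n : ℝ)) := by
  obtain ⟨M, rfl⟩ : ∃ M, m = M + 1 := ⟨m - 1, by omega⟩
  have hM1 : M + 1 - 1 = M := by omega
  rw [hM1]
  have hnM : n ≤ M := by omega
  have hα1 : (0:ℝ) < α + 1 := by linarith
  have hγ1 : (0:ℝ) < γ + 1 := by linarith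
  -- expansions
  have expand1 : ∀ x : ℝ, jacobiP n γ α (2*x-1)
      = poch (γ+1) n / (Nat.factorial n : ℝ) * ∑ k ∈ range (n+1),
          poch (-(n:ℝ)) k * poch ((n:ℝ)+γ+α+1) k /
            (poch (γ+1) k * (Nat.factorial k : ℝ)) * (1-x)^k := by
    intro x
    unfold jacobiP
    simp only [show (1-(2*x-1))/2 = 1-x from by ring]
  have expand2 : ∀ x : ℝ, jacobiP M (γ+2) α (2*x-1)
      = (-1:ℝ)^M * (poch (α+1) M / (Nat.factorial M : ℝ) * ∑ j ∈ range (M+1),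
          poch (-(M:ℝ)) j * poch ((M:ℝ)+α+(γ+2)+1) j /
            (poch (α+1) j * (Nat.factorial j : ℝ)) * x^j) := by
    intro x
    rw [jacobiP_reflect M (γ+2) α (by linarith) hα (2*x-1)]
    congr 1
    unfold jacobiP
    simp only [show (1 - -(2*x-1))/2 = x from by ring]
  -- pointwise expansion of the integrand on Ioo 0 1
  have key : Set.EqOn
      (fun x : ℝ => jacobiP n γ α (2 * x - 1) * jacobiP M (γ + 2) α (2 * x - 1) *
          ((1 - x) ^ (γ + 1) * x ^ α))
      (fun x : ℝ => ∑ k ∈ range (n+1), ∑ j ∈ range (M+1),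
          (poch (γ+1) n / (Nat.factorial n : ℝ) *
              (poch (-(n:ℝ)) k * poch ((n:ℝ)+γ+α+1) k /
                (poch (γ+1) k * (Nat.factorial k : ℝ))) *
            ((-1:ℝ)^M * (poch (α+1) M / (Nat.factorial M : ℝ)) *
              (poch (-(M:ℝ)) j * poch ((M:ℝ)+α+(γ+2)+1) j /
                (poch (α+1) j * (Nat.factorial j : ℝ))))) *
            (x ^ (α + (j:ℝ)) * (1-x) ^ (γ + 1 + (k:ℝ))))
      (Set.Ioo 0 1) := by
    intro x hx
    obtain ⟨hx0, hx1⟩ := hx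
    simp only
    rw [expand1 x, expand2 x]
    have hmain : poch (γ+1) n / (Nat.factorial n : ℝ) * (∑ k ∈ range (n+1),
          poch (-(n:ℝ)) k * poch ((n:ℝ)+γ+α+1) k /
            (poch (γ+1) k * (Nat.factorial k : ℝ)) * (1-x)^k) *
        ((-1:ℝ)^M * (poch (α+1) M / (Nat.factorial M : ℝ) * ∑ j ∈ range (M+1),
          poch (-(M:ℝ)) j * poch ((M:ℝ)+α+(γ+2)+1) j /
            (poch (α+1) j * (Nat.factorial j : ℝ)) * x^j)) *
        ((1 - x) ^ (γ + 1) * x ^ α)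
        = (poch (γ+1) n / (Nat.factorial n : ℝ) * ((-1:ℝ)^M * (poch (α+1) M / (Nat.factorial M : ℝ))) *
            ((1 - x) ^ (γ + 1) * x ^ α)) *
          ((∑ k ∈ range (n+1),
            poch (-(n:ℝ)) k * poch ((n:ℝ)+γ+α+1) k /
              (poch (γ+1) k * (Nat.factorial k : ℝ)) * (1-x)^k) *
           (∑ j ∈ range (M+1),
            poch (-(M:ℝ)) j * poch ((M:ℝ)+α+(γ+2)+1) j /
              (poch (α+1) j * (Nat.factorial j : ℝ)) * x^j)) := by ring
    rw [hmain, Finset.sum_mul_sum, Finset.mul_sum]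
    refine Finset.sum_congr rfl fun k hk => ?_
    rw [Finset.mul_sum]
    refine Finset.sum_congr rfl fun j hj => ?_
    have hxj : x ^ (α + (j:ℝ)) = x ^ α * x ^ (j:ℕ) := by
      rw [Real.rpow_add hx0, Real.rpow_natCast]
    have hxk : (1-x) ^ (γ + 1 + (k:ℝ)) = (1-x) ^ (γ+1) * (1-x) ^ (k:ℕ) := by
      rw [Real.rpow_add (by linarith), Real.rpow_natCast]
    rw [hxj, hxk]
    ring
  -- integrability of each term
  have hint : ∀ k ∈ range (n+1), ∀ j ∈ range (M+1),
      IntegrableOn (fun x : ℝ =>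
        (poch (γ+1) n / (Nat.factorial n : ℝ) *
            (poch (-(n:ℝ)) k * poch ((n:ℝ)+γ+α+1) k /
              (poch (γ+1) k * (Nat.factorial k : ℝ))) *
          ((-1:ℝ)^M * (poch (α+1) M / (Nat.factorial M : ℝ)) *
            (poch (-(M:ℝ)) j * poch ((M:ℝ)+α+(γ+2)+1) j /
              (poch (α+1) j * (Nat.factorial j : ℝ))))) *
          (x ^ (α + (j:ℝ)) * (1-x) ^ (γ + 1 + (k:ℝ)))) (Set.Ioo 0 1) volume := by
    intro k _ j _
    have hp : (-1:ℝ) < α + (j:ℝ) := by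
      have := Nat.cast_nonneg (α := ℝ) j; linarith
    have hq : (-1:ℝ) < γ + 1 + (k:ℝ) := by
      have := Nat.cast_nonneg (α := ℝ) k; linarith
    exact (rbeta_integrableOn hp hq).const_mul _
  -- compute the integral
  have hI : (∫ x in (0:ℝ)..1,
      jacobiP n γ α (2 * x - 1) * jacobiP M (γ + 2) α (2 * x - 1) *
        ((1 - x) ^ (γ + 1) * x ^ α))
      = ∑ k ∈ range (n+1), ∑ j ∈ range (M+1),
        (poch (γ+1) n / (Nat.factorial n : ℝ) *
            (poch (-(n:ℝ)) k * poch ((n:ℝ)+γ+α+1) k /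
              (poch (γ+1) k * (Nat.factorial k : ℝ))) *
          ((-1:ℝ)^M * (poch (α+1) M / (Nat.factorial M : ℝ)) *
            (poch (-(M:ℝ)) j * poch ((M:ℝ)+α+(γ+2)+1) j /
              (poch (α+1) j * (Nat.factorial j : ℝ))))) *
          (Real.Gamma (α + (j:ℝ) + 1) * Real.Gamma (γ + 1 + (k:ℝ) + 1) /
            Real.Gamma (α + (j:ℝ) + (γ + 1 + (k:ℝ)) + 2)) := by
    rw [intervalIntegral.integral_of_le (by norm_num : (0:ℝ) ≤ 1),
      MeasureTheory.integral_Ioc_eq_integral_Ioo,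
      MeasureTheory.setIntegral_congr_fun measurableSet_Ioo key,
      MeasureTheory.integral_finset_sum _ (fun k hk =>
        MeasureTheory.integrable_finset_sum _ (fun j hj => hint k hk j hj))]
    refine Finset.sum_congr rfl fun k hk => ?_
    rw [MeasureTheory.integral_finset_sum _ (fun j hj => hint k hk j hj)]
    refine Finset.sum_congr rfl fun j hj => ?_
    rw [MeasureTheory.integral_const_mul]
    congr 1
    have hp : (-1:ℝ) < α + (j:ℝ) := by
      have := Nat.cast_nonneg (α := ℝ) j; linarith
    have hq : (-1:ℝ) < γ + 1 + (k:ℝ) := by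
      have := Nat.cast_nonneg (α := ℝ) k; linarith
    exact rbeta_Ioo hp hq
  rw [hI]
  -- evaluate the inner sums via Chu–Vandermonde
  have inner : ∀ k ∈ range (n+1),
      (∑ j ∈ range (M+1),
        (poch (γ+1) n / (Nat.factorial n : ℝ) *
            (poch (-(n:ℝ)) k * poch ((n:ℝ)+γ+α+1) k /
              (poch (γ+1) k * (Nat.factorial k : ℝ))) *
          ((-1:ℝ)^M * (poch (α+1) M / (Nat.factorial M : ℝ)) *
            (poch (-(M:ℝ)) j * poch ((M:ℝ)+α+(γ+2)+1) j /
              (poch (α+1) j * (Nat.factorial j : ℝ))))) *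
          (Real.Gamma (α + (j:ℝ) + 1) * Real.Gamma (γ + 1 + (k:ℝ) + 1) /
            Real.Gamma (α + (j:ℝ) + (γ + 1 + (k:ℝ)) + 2)))
      = (poch (γ+1) n / (Nat.factorial n : ℝ) *
            (poch (-(n:ℝ)) k * poch ((n:ℝ)+γ+α+1) k /
              (poch (γ+1) k * (Nat.factorial k : ℝ))) *
          ((-1:ℝ)^M * (poch (α+1) M / (Nat.factorial M : ℝ))) *
          (Real.Gamma (α+1) * Real.Gamma (γ + (k:ℝ) + 2) / Real.Gamma (α + γ + (k:ℝ) + 3))) *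
          (poch ((k:ℝ) - (M:ℝ)) M / poch (α + γ + (k:ℝ) + 3) M) := by
    intro k hk
    have hck : (0:ℝ) < α + γ + (k:ℝ) + 3 := by
      have := Nat.cast_nonneg (α := ℝ) k; linarith
    have hterm : ∀ j ∈ range (M+1),
        (poch (γ+1) n / (Nat.factorial n : ℝ) *
            (poch (-(n:ℝ)) k * poch ((n:ℝ)+γ+α+1) k /
              (poch (γ+1) k * (Nat.factorial k : ℝ))) *
          ((-1:ℝ)^M * (poch (α+1) M / (Nat.factorial M : ℝ)) *
            (poch (-(M:ℝ)) j * poch ((M:ℝ)+α+(γ+2)+1) j /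
              (poch (α+1) j * (Nat.factorial j : ℝ))))) *
          (Real.Gamma (α + (j:ℝ) + 1) * Real.Gamma (γ + 1 + (k:ℝ) + 1) /
            Real.Gamma (α + (j:ℝ) + (γ + 1 + (k:ℝ)) + 2))
        = (poch (γ+1) n / (Nat.factorial n : ℝ) *
            (poch (-(n:ℝ)) k * poch ((n:ℝ)+γ+α+1) k /
              (poch (γ+1) k * (Nat.factorial k : ℝ))) *
          ((-1:ℝ)^M * (poch (α+1) M / (Nat.factorial M : ℝ))) *
          (Real.Gamma (α+1) * Real.Gamma (γ + (k:ℝ) + 2) / Real.Gamma (α + γ + (k:ℝ) + 3))) *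
          (poch (-(M:ℝ)) j * poch ((M:ℝ)+α+(γ+2)+1) j /
            (poch (α + γ + (k:ℝ) + 3) j * (Nat.factorial j : ℝ))) := by
      intro j hj
      have e1 : Real.Gamma (α + (j:ℝ) + 1) = poch (α+1) j * Real.Gamma (α+1) := by
        rw [show α + (j:ℝ) + 1 = (α+1) + (j:ℝ) from by ring, Gamma_shift _ hα1]
      have e2 : Real.Gamma (γ + 1 + (k:ℝ) + 1) = Real.Gamma (γ + (k:ℝ) + 2) := by
        rw [show γ + 1 + (k:ℝ) + 1 = γ + (k:ℝ) + 2 from by ring]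
      have e3 : Real.Gamma (α + (j:ℝ) + (γ + 1 + (k:ℝ)) + 2)
          = poch (α + γ + (k:ℝ) + 3) j * Real.Gamma (α + γ + (k:ℝ) + 3) := by
        rw [show α + (j:ℝ) + (γ + 1 + (k:ℝ)) + 2 = (α + γ + (k:ℝ) + 3) + (j:ℝ) from by ring,
          Gamma_shift _ hck]
      rw [e1, e2, e3]
      have h1 : poch (α+1) j ≠ 0 := poch_ne_zero hα1 j
      have h2 : poch (α + γ + (k:ℝ) + 3) j ≠ 0 := poch_ne_zero hck j
      have h3 : (Nat.factorial j : ℝ) ≠ 0 := Nat.cast_ne_zero.mpr (Nat.factorial_ne_zero j)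
      have h4 : Real.Gamma (α + γ + (k:ℝ) + 3) ≠ 0 := (Real.Gamma_pos_of_pos hck).ne'
      have h5 : (Nat.factorial n : ℝ) ≠ 0 := Nat.cast_ne_zero.mpr (Nat.factorial_ne_zero n)
      have h6 : (Nat.factorial k : ℝ) ≠ 0 := Nat.cast_ne_zero.mpr (Nat.factorial_ne_zero k)
      have h7 : (Nat.factorial M : ℝ) ≠ 0 := Nat.cast_ne_zero.mpr (Nat.factorial_ne_zero M)
      have h8 : poch (γ+1) k ≠ 0 := poch_ne_zero hγ1 k
      field_simp
    rw [Finset.sum_congr rfl hterm, ← Finset.mul_sum,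
      chu M ((M:ℝ)+α+(γ+2)+1) hck,
      show α + γ + (k:ℝ) + 3 - ((M:ℝ)+α+(γ+2)+1) = (k:ℝ) - (M:ℝ) from by ring]
  rw [Finset.sum_congr rfl inner]
  -- only the k = 0 term survives
  rw [Finset.sum_eq_single_of_mem 0 (Finset.mem_range.mpr (by omega))
    (fun k hk hk0 => ?_)]
  swap
  · -- vanishing for 1 ≤ k ≤ M
    have hkn : k ≤ n := Nat.lt_succ_iff.mp (Finset.mem_range.mp hk)
    have hkM : k ≤ M := le_trans hkn hnM
    have hz : poch ((k:ℝ) - (M:ℝ)) M = 0 := by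
      refine poch_eq_zero_of_neg_nat (i := M - k) (by omega) ?_
      push_cast [Nat.cast_sub hkM]
      ring
    rw [hz, zero_div, mul_zero]
  -- the k = 0 term
  · have hc0 : ((0:ℕ):ℝ) = (0:ℝ) := by norm_num
    simp only [hc0]
    have hA0 : poch (-(n:ℝ)) 0 * poch ((n:ℝ)+γ+α+1) 0 /
        (poch (γ+1) 0 * (Nat.factorial 0 : ℝ)) = 1 := by
      simp [poch_zero]
    have hP0 : poch ((0:ℝ) - (M:ℝ)) M = (-1:ℝ)^M * (Nat.factorial M : ℝ) := by
      rw [show (0:ℝ) - (M:ℝ) = -(M:ℝ) from by ring, poch_neg,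
        show (M:ℝ) - (M:ℕ) + 1 = 1 from by push_cast; ring, poch_one_fact]
    rw [hA0, hP0]
    have hBpos : (0:ℝ) < γ + α + 2 := by linarith
    have hBne : (γ + α + 2 : ℝ) ≠ 0 := by linarith
    have hGγ : Real.Gamma (γ+1) ≠ 0 := (Real.Gamma_pos_of_pos hγ1).ne'
    have hGα : Real.Gamma (α+1) ≠ 0 := (Real.Gamma_pos_of_pos hα1).ne'
    have hGB : Real.Gamma (γ+α+2) ≠ 0 := (Real.Gamma_pos_of_pos hBpos).ne'
    have hfn : (Nat.factorial n : ℝ) ≠ 0 := Nat.cast_ne_zero.mpr (Nat.factorial_ne_zero n)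
    have hfM : (Nat.factorial M : ℝ) ≠ 0 := Nat.cast_ne_zero.mpr (Nat.factorial_ne_zero M)
    have hpB : poch (α + γ + (0:ℝ) + 3) M ≠ 0 := poch_ne_zero (by linarith) M
    have eΓ2 : Real.Gamma (γ + (0:ℝ) + 2) = (γ+1) * Real.Gamma (γ+1) := by
      rw [show γ + (0:ℝ) + 2 = (γ+1) + 1 from by ring, Real.Gamma_add_one (by linarith)]
    have eΓ3 : Real.Gamma (α + γ + (0:ℝ) + 3) = (γ+α+2) * Real.Gamma (γ+α+2) := by
      rw [show α + γ + (0:ℝ) + 3 = (γ+α+2) + 1 from by ring, Real.Gamma_add_one (by linarith)]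
    have epoch : poch (γ + α + 2) (M+1) = (γ+α+2) * poch (α + γ + (0:ℝ) + 3) M := by
      rw [poch_succ_left, show γ + α + 2 + 1 = α + γ + (0:ℝ) + 3 from by ring]
    rw [eΓ2, eΓ3, epoch]
    unfold cJ
    have hsq : (-1:ℝ)^M * (-1:ℝ)^M = 1 := by
      rw [← pow_add]
      exact Even.neg_one_pow ⟨M, rfl⟩
    rcases Nat.even_or_odd M with hM2 | hM2 <;>
      simp only [hM2.neg_one_pow] <;>
      (set GB := Real.Gamma (γ + α + 2)
       set G1 := Real.Gamma (γ + 1)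
       set G2 := Real.Gamma (α + 1)
       set PB := poch (α + γ + 0 + 3) M
       set P1 := poch (γ + 1) n
       set P2 := poch (α + 1) M
       set u := γ + α + 2 with hu
       field_simp)

end
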